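/- Let h be a C²-diffeomorphism of S¹ and g ∈ G. Then lim_{k→∞} ∏_{i=0}^{k−1} [(h(g(t_{i+1})) − h(g(t_i)))/(g(t_{i+1}) − g(t_i))]^{β(t_{i+1}−t_i)} = exp(β ∫₀¹ log h′(g(s)) ds), where t_i = i/k. -/

import Mathlib

open scoped Classical

/-- Monotone maps of `S¹ = ℝ/ℤ`, represented by right-continuous nondecreasing maps
`g : ℝ → ℝ` with `g(x+1) = g(x)+1`. -/
def IsGR (g : ℝ → ℝ) : Prop :=
  Monotone g ∧ (∀ t : ℝ, ContinuousWithinAt g (Set.Ici t) t) ∧ ∀ x, g (x + 1) = g x + 1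

/-- The difference quotient `(h(g(t_{i+1})) − h(g(t_i)))/(g(t_{i+1}) − g(t_i))`
(interpreted as `h′(g(t_i))` when `g(t_{i+1}) = g(t_i)`). -/
noncomputable def diffQuot (h g : ℝ → ℝ) (u v : ℝ) : ℝ :=
  if g v = g u then deriv h (g u) else (h (g v) - h (g u)) / (g v - g u)

/-- `lim_{k→∞} ∏_{i=0}^{k−1} [(h(g(t_{i+1}))−h(g(t_i)))/(g(t_{i+1})−g(t_i))]^{β(t_{i+1}−t_i)}
  = exp(β ∫₀¹ log h′(g(s)) ds)` where `t_i = i/k`. -/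
theorem X_approx_limit (g h : ℝ → ℝ) (β : ℝ) (hβ : 0 < β)
    (hg : IsGR g) (hh : IsGR h) (hh2 : ContDiff ℝ 2 h) (hh' : ∀ x, 0 < deriv h x) :
    Filter.Tendsto
      (fun k : ℕ => ∏ i ∈ Finset.range k,
        (diffQuot h g ((i : ℝ) / k) (((i : ℝ) + 1) / k)) ^ (β * (1 / (k : ℝ))))
      Filter.atTop
      (nhds (Real.exp (β * ∫ s in (0:ℝ)..1, Real.log (deriv h (g s))))) := by
  obtain ⟨hgm, -, hgp⟩ := hg
  have hdiff : Differentiable ℝ h := hh2.differentiable (by norm_num)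
  have hderc : Continuous (deriv h) := hh2.continuous_deriv one_le_two
  set φ : ℝ → ℝ := fun x => Real.log (deriv h x) with hφdef
  have hφc : Continuous φ := hderc.log fun x => (hh' x).ne'
  have hg1 : g 1 = g 0 + 1 := by simpa using hgp 0
  -- MVT representation of the difference quotient
  have hdq : ∀ u v : ℝ, u ≤ v → ∃ ξ ∈ Set.Icc (g u) (g v), diffQuot h g u v = deriv h ξ := by
    intro u v huv
    rcases eq_or_lt_of_le (hgm huv) with he | hlt
    · exact ⟨g u, ⟨le_refl _, he.le⟩, by simp [diffQuot, he.symm]⟩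
    · obtain ⟨c, hc, hceq⟩ := exists_hasDerivAt_eq_slope h (deriv h) hlt
        hdiff.continuous.continuousOn (fun x _ => (hdiff x).hasDerivAt)
      exact ⟨c, ⟨hc.1.le, hc.2.le⟩, by rw [diffQuot, if_neg hlt.ne', hceq]⟩
  have hdqpos : ∀ u v : ℝ, u ≤ v → 0 < diffQuot h g u v := by
    intro u v huv
    obtain ⟨ξ, -, hξ⟩ := hdq u v huv
    rw [hξ]; exact hh' ξ
  have huv : ∀ (k : ℕ) (i : ℕ), ((i : ℝ)) / k ≤ ((i : ℝ) + 1) / k := by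
    intro k i
    rcases Nat.eq_zero_or_pos k with hk | hk
    · simp [hk]
    · have hk' : (0:ℝ) < k := by exact_mod_cast hk
      exact (div_le_div_iff_of_pos_right hk').2 (by linarith)
  -- rewrite the product as an exponential of a Riemann-type sum
  have heq : ∀ k : ℕ,
      (∏ i ∈ Finset.range k, (diffQuot h g ((i : ℝ) / k) (((i : ℝ) + 1) / k)) ^ (β * (1 / (k : ℝ))))
        = Real.exp (β * ((1 / (k : ℝ)) *
            ∑ i ∈ Finset.range k, Real.log (diffQuot h g ((i : ℝ) / k) (((i : ℝ) + 1) / k)))) := by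
    intro k
    have hfac : ∀ i ∈ Finset.range k,
        (diffQuot h g ((i : ℝ) / k) (((i : ℝ) + 1) / k)) ^ (β * (1 / (k : ℝ)))
          = Real.exp (Real.log (diffQuot h g ((i : ℝ) / k) (((i : ℝ) + 1) / k)) * (β * (1 / (k : ℝ)))) :=
      fun i _ => Real.rpow_def_of_pos (hdqpos _ _ (huv k i)) _
    rw [Finset.prod_congr rfl hfac, ← Real.exp_sum, ← Finset.sum_mul]
    congr 1
    ring
  set I := ∫ s in (0:ℝ)..1, Real.log (deriv h (g s)) with hI
  -- the key convergence of Riemann-type sums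
  have main : Filter.Tendsto
      (fun k : ℕ => (1 / (k : ℝ)) *
        ∑ i ∈ Finset.range k, Real.log (diffQuot h g ((i : ℝ) / k) (((i : ℝ) + 1) / k)))
      Filter.atTop (nhds I) := by
    -- compactness / uniform continuity setup
    have hKc : IsCompact (Set.Icc (g 0) (g 1)) := isCompact_Icc
    obtain ⟨M, hM⟩ := hKc.exists_bound_of_continuousOn hφc.continuousOn
    have hg0K : g 0 ∈ Set.Icc (g 0) (g 1) := ⟨le_rfl, by rw [hg1]; linarith⟩
    have hM0 : 0 ≤ M := le_trans (norm_nonneg _) (hM (g 0) hg0K)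
    have hmem : ∀ s : ℝ, 0 ≤ s → s ≤ 1 → g s ∈ Set.Icc (g 0) (g 1) :=
      fun s h0 h1 => ⟨hgm h0, hgm h1⟩
    have hmeas : Measurable fun s => φ (g s) := hφc.measurable.comp hgm.measurable
    have hint : ∀ u v : ℝ, 0 ≤ u → v ≤ 1 → u ≤ v →
        IntervalIntegrable (fun s => φ (g s)) MeasureTheory.volume u v := by
      intro u v h0 h1 huv'
      rw [intervalIntegrable_iff]
      apply MeasureTheory.Measure.integrableOn_of_bounded (M := M)
      · rw [Set.uIoc_of_le huv']
        exact measure_Ioc_lt_top.ne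
      · exact hmeas.aestronglyMeasurable
      · rw [Set.uIoc_of_le huv']
        refine (MeasureTheory.ae_restrict_iff' measurableSet_Ioc).2 (MeasureTheory.ae_of_all _ ?_)
        intro x hx
        exact hM (g x) (hmem x (le_trans h0 hx.1.le) (le_trans hx.2 h1))
    rw [Metric.tendsto_atTop]
    intro ε hε
    obtain ⟨δ, hδ0, hδ⟩ := Metric.uniformContinuousOn_iff.1
      (hKc.uniformContinuousOn_of_continuous hφc.continuousOn) (ε / 2) (by positivity)
    obtain ⟨N0, hN0⟩ := exists_nat_gt ((2 * M / δ) / (ε / 2))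
    refine ⟨max N0 1, fun k hk => ?_⟩
    have hk1 : 1 ≤ k := le_trans (le_max_right _ _) hk
    have hkN : N0 ≤ k := le_trans (le_max_left _ _) hk
    have hk0 : (0 : ℝ) < k := by exact_mod_cast hk1
    -- decompose the integral
    have hIdecomp : ∑ i ∈ Finset.range k, ∫ s in ((i : ℝ) / k)..(((i : ℝ) + 1) / k), φ (g s) = I := by
      have h1le : ∀ i : ℕ, i < k → ((i : ℝ) + 1) / k ≤ 1 := by
        intro i hi
        rw [div_le_one hk0]
        exact_mod_cast Nat.succ_le_of_lt hi
      have := intervalIntegral.sum_integral_adjacent_intervals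
        (a := fun i : ℕ => (i : ℝ) / k) (n := k) (μ := MeasureTheory.volume)
        (f := fun s => φ (g s))
        (fun i hi => by
          have := hint ((i : ℝ) / k) (((i : ℝ) + 1) / k) (by positivity) (h1le i hi) (huv k i)
          simpa using this)
      push_cast at this
      rw [this, zero_div, div_self hk0.ne']
    -- per-interval estimate
    have hterm : ∀ i ∈ Finset.range k,
        |(1 / (k : ℝ)) * Real.log (diffQuot h g ((i : ℝ) / k) (((i : ℝ) + 1) / k))
            - ∫ s in ((i : ℝ) / k)..(((i : ℝ) + 1) / k), φ (g s)|
          ≤ (1 / (k : ℝ)) * (ε / 2 + (2 * M / δ) * (g (((i : ℝ) + 1) / k) - g ((i : ℝ) / k))) := by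
      intro i hi
      have hik : (i : ℝ) + 1 ≤ k := by exact_mod_cast Nat.succ_le_of_lt (Finset.mem_range.1 hi)
      set u := (i : ℝ) / k with hu
      set v := ((i : ℝ) + 1) / k with hv
      have huv' : u ≤ v := huv k i
      have hu0 : 0 ≤ u := by positivity
      have hv1 : v ≤ 1 := by rw [hv, div_le_one hk0]; exact hik
      have hvu : v - u = 1 / (k : ℝ) := by
        rw [hu, hv]; field_simp; ring
      have hΔ0 : 0 ≤ g v - g u := sub_nonneg.2 (hgm huv')
      obtain ⟨ξ, hξmem, hξ⟩ := hdq u v huv'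
      have hKu : g u ∈ Set.Icc (g 0) (g 1) := hmem u hu0 (le_trans huv' hv1)
      have hKv : g v ∈ Set.Icc (g 0) (g 1) := hmem v (le_trans hu0 huv') hv1
      have hξK : ξ ∈ Set.Icc (g 0) (g 1) := ⟨le_trans hKu.1 hξmem.1, le_trans hξmem.2 hKv.2⟩
      have hlog : Real.log (diffQuot h g u v) = φ ξ := by rw [hξ]
      have hconst : (1 / (k : ℝ)) * φ ξ = ∫ _ in u..v, φ ξ := by
        rw [intervalIntegral.integral_const, smul_eq_mul, hvu]
      rw [hlog, hconst,
        ← intervalIntegral.integral_sub intervalIntegrable_const (hint u v hu0 hv1 huv')]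
      have hbound : ∀ s ∈ Set.uIoc u v,
          ‖φ ξ - φ (g s)‖ ≤ ε / 2 + (2 * M / δ) * (g v - g u) := by
        intro s hs
        rw [Set.uIoc_of_le huv'] at hs
        have hgs : g s ∈ Set.Icc (g u) (g v) := ⟨hgm hs.1.le, hgm hs.2⟩
        have hgsK : g s ∈ Set.Icc (g 0) (g 1) := ⟨le_trans hKu.1 hgs.1, le_trans hgs.2 hKv.2⟩
        have hdist : |ξ - g s| ≤ g v - g u := by
          rw [abs_le]
          constructor
          · linarith [hξmem.1, hgs.2]
          · linarith [hξmem.2, hgs.1]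
        rw [Real.norm_eq_abs]
        rcases lt_or_ge (g v - g u) δ with hsmall | hbig
        · have hlt := hδ ξ hξK (g s) hgsK
            (by rw [Real.dist_eq]; exact lt_of_le_of_lt hdist hsmall)
          rw [Real.dist_eq] at hlt
          have : 0 ≤ (2 * M / δ) * (g v - g u) := by positivity
          linarith
        · have h2M : |φ ξ - φ (g s)| ≤ 2 * M := by
            have h1 := hM ξ hξK
            have h2 := hM (g s) hgsK
            rw [Real.norm_eq_abs] at h1 h2
            calc |φ ξ - φ (g s)| ≤ |φ ξ| + |φ (g s)| := abs_sub _ _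
              _ ≤ 2 * M := by linarith
          have h2M' : 2 * M ≤ (2 * M / δ) * (g v - g u) := by
            have := mul_le_mul_of_nonneg_left hbig (by positivity : (0:ℝ) ≤ 2 * M / δ)
            rwa [div_mul_cancel₀ _ hδ0.ne'] at this
          linarith
      have hnorm := intervalIntegral.norm_integral_le_of_norm_le_const hbound
      rw [Real.norm_eq_abs] at hnorm
      calc |∫ s in u..v, (φ ξ - φ (g s))|
          ≤ (ε / 2 + (2 * M / δ) * (g v - g u)) * |v - u| := hnorm
        _ = (1 / (k : ℝ)) * (ε / 2 + (2 * M / δ) * (g v - g u)) := by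
            rw [abs_of_nonneg (by linarith : (0:ℝ) ≤ v - u), hvu]; ring
    -- sum the per-interval estimates
    have hΔsum : ∑ i ∈ Finset.range k, (g (((i : ℝ) + 1) / k) - g ((i : ℝ) / k)) = 1 := by
      have hts := Finset.sum_range_sub (f := fun i : ℕ => g ((i : ℝ) / k)) k
      push_cast at hts
      rw [hts]
      simp [div_self hk0.ne', hg1]
    have hsum : |(1 / (k : ℝ)) *
          (∑ i ∈ Finset.range k, Real.log (diffQuot h g ((i : ℝ) / k) (((i : ℝ) + 1) / k))) - I|
        ≤ ε / 2 + (2 * M / δ) * (1 / (k : ℝ)) := by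
      calc |(1 / (k : ℝ)) *
              (∑ i ∈ Finset.range k, Real.log (diffQuot h g ((i : ℝ) / k) (((i : ℝ) + 1) / k))) - I|
          = |∑ i ∈ Finset.range k,
              ((1 / (k : ℝ)) * Real.log (diffQuot h g ((i : ℝ) / k) (((i : ℝ) + 1) / k))
                - ∫ s in ((i : ℝ) / k)..(((i : ℝ) + 1) / k), φ (g s))| := by
            rw [← hIdecomp, Finset.sum_sub_distrib, Finset.mul_sum]
        _ ≤ ∑ i ∈ Finset.range k,
              |(1 / (k : ℝ)) * Real.log (diffQuot h g ((i : ℝ) / k) (((i : ℝ) + 1) / k))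
                - ∫ s in ((i : ℝ) / k)..(((i : ℝ) + 1) / k), φ (g s)| :=
            Finset.abs_sum_le_sum_abs _ _
        _ ≤ ∑ i ∈ Finset.range k,
              (1 / (k : ℝ)) * (ε / 2 + (2 * M / δ) * (g (((i : ℝ) + 1) / k) - g ((i : ℝ) / k))) :=
            Finset.sum_le_sum hterm
        _ = ε / 2 + (2 * M / δ) * (1 / (k : ℝ)) := by
            rw [← Finset.mul_sum, Finset.sum_add_distrib, Finset.sum_const, ← Finset.mul_sum, hΔsum,
              Finset.card_range, nsmul_eq_mul]
            field_simp
    have hfin : (2 * M / δ) * (1 / (k : ℝ)) < ε / 2 := by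
      have hN0' : (2 * M / δ) < (ε / 2) * N0 := by
        rw [div_lt_iff₀ (by positivity : (0:ℝ) < ε / 2)] at hN0
        linarith [hN0]
      have hkN' : (N0 : ℝ) ≤ k := by exact_mod_cast hkN
      rw [mul_one_div, div_lt_iff₀ hk0]
      calc 2 * M / δ < (ε / 2) * N0 := hN0'
        _ ≤ (ε / 2) * k := by
            apply mul_le_mul_of_nonneg_left hkN' (by positivity)
      
    rw [Real.dist_eq]
    calc |(1 / (k : ℝ)) *
            (∑ i ∈ Finset.range k, Real.log (diffQuot h g ((i : ℝ) / k) (((i : ℝ) + 1) / k))) - I|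
        ≤ ε / 2 + (2 * M / δ) * (1 / (k : ℝ)) := hsum
      _ < ε := by linarith
  -- conclude
  have hcomp := (Real.continuous_exp.tendsto _).comp (main.const_mul β)
  refine hcomp.congr ?_
  intro k
  exact (heq k).symm
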